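/- arXiv:2303.14023 — 3 statements merged into one kernel-verified Lean document; each statement's English description precedes it below -/
import Mathlib

section
/- For real numbers λ₂, λ_N with 0 < λ₂ < λ_N, one has √(1 - 2/(√(2λ_N/λ₂ - 1) + 1)) < √(1 - 2/(λ_N/λ₂ + 1)). That is, the optimal convergence rate with one-tap memory r₁* is strictly smaller than the optimal memoryless rate r₀*. -/
theorem one_tap_memory_rate_lt_memoryless_rate
    (l2 lN : ℝ) (h0 : 0 < l2) (h : l2 < lN) :
    Real.sqrt (1 - 2 / (Real.sqrt (2 * lN / l2 - 1) + 1)) <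
      Real.sqrt (1 - 2 / (lN / l2 + 1)) := by
  set κ := lN / l2 with hκdef
  have hκ : 1 < κ := (one_lt_div h0).2 h
  have h2 : 2 * lN / l2 - 1 = 2 * κ - 1 := by rw [hκdef]; field_simp
  rw [h2]
  set s := Real.sqrt (2 * κ - 1) with hs
  have hs1 : 1 < s := by
    have h1 : Real.sqrt 1 < s := Real.sqrt_lt_sqrt zero_le_one (by linarith)
    simpa using h1
  have hsκ : s < κ := (Real.sqrt_lt' (by linarith)).2 (by nlinarith)
  apply Real.sqrt_lt_sqrt
  · have : 2 / (s + 1) ≤ 1 := by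
      rw [div_le_one (by linarith)]; linarith
    linarith
  · have : 2 / (κ + 1) < 2 / (s + 1) := by
      apply div_lt_div_of_pos_left (by norm_num) (by linarith) (by linarith)
    linarith
end

section
/- Let Φ(λ) be the (M+2)×(M+2) matrix with first row (1, τ, 0, …, 0), second row (-τε₁λ, 1 - τε₂λ + τθ₀, τθ₁, …, τθ_M), and rows 3 through M+2 given by the shift structure (row j+2 has a 1 in column j+1 and zeros elsewhere, for j = 1,…,M, with last row having 1 in column M+1 and 0 in the last column). Then det(zI - Φ(λ)) = z^M [(z-1)(z - 1 + τε₂λ - Σ_{m=0}^M τθ_m z^{-m}) + τ²ε₁λ], i.e. equals z^M(z-1)(z-1+τε₂λ) - (z-1)Σ_{m=0}^M τθ_m z^{M-m} + τ²ε₁λ z^M as polynomials in z. -/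
/-- Companion-type matrix: first row `a`, subdiagonal `-1`, diagonal `z` below row 0. -/
def CompAux (M : ℕ) (z : ℝ) (a : ℕ → ℝ) : Matrix (Fin (M + 1)) (Fin (M + 1)) ℝ := fun i j =>
  if (i : ℕ) = 0 then a j
  else if (j : ℕ) + 1 = (i : ℕ) then -1 else if (j : ℕ) = (i : ℕ) then z else 0

lemma compAux_det (M : ℕ) (z : ℝ) (a : ℕ → ℝ) :
    (CompAux M z a).det = ∑ m ∈ Finset.range (M + 1), a m * z ^ (M - m) := by
  induction M generalizing a with
  | zero => simp [CompAux, Matrix.det_fin_one]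
  | succ M ih =>
    rw [Matrix.det_succ_column_zero,
      Fin.sum_univ_succ, Fin.sum_univ_succ]
    have hzero : ∀ i : Fin M,
        CompAux (M+1) z a (i.succ.succ) 0 = 0 := by
      intro i
      simp only [CompAux, Fin.val_succ, Fin.val_zero]
      split_ifs <;> first | rfl | (exfalso; first | exact ‹False› | omega)
    have hB0 : (CompAux (M+1) z a).submatrix (Fin.succAbove 0) Fin.succ
        = CompAux M z (fun m => if m = 0 then z else 0) := by
      ext i j
      simp only [Matrix.submatrix_apply, Fin.succAbove_zero, CompAux, Fin.val_succ]
      split_ifs <;> first | rfl | (exfalso; first | exact ‹False› | omega)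
    have hB1 : (CompAux (M+1) z a).submatrix (Fin.succAbove (0 : Fin (M+1)).succ) Fin.succ
        = CompAux M z (fun m => a (m + 1)) := by
      ext i j
      simp only [Matrix.submatrix_apply, Fin.succAbove, CompAux]
      split_ifs <;>
        simp only [Fin.lt_def, Fin.coe_castSucc, Fin.val_succ, Fin.val_zero] at * <;>
        first | rfl | (exfalso; first | exact ‹False› | omega)
    rw [hB0, hB1, ih, ih]
    have e0 : CompAux (M+1) z a 0 0 = a 0 := by simp [CompAux]
    have e1 : CompAux (M+1) z a (0 : Fin (M+1)).succ 0 = -1 := by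
      simp [CompAux]
    have hz : (∑ i : Fin M, (-1:ℝ) ^ ((i.succ.succ : Fin (M+2)) : ℕ) *
        CompAux (M+1) z a i.succ.succ 0 *
        ((CompAux (M+1) z a).submatrix i.succ.succ.succAbove Fin.succ).det) = 0 :=
      Finset.sum_eq_zero fun i _ => by rw [hzero i]; ring
    rw [e0, e1, hz]
    have hsum : (∑ m ∈ Finset.range (M + 1), (if m = 0 then z else 0) * z ^ (M - m))
        = z ^ (M + 1) := by
      simp [ite_mul, Finset.sum_ite_eq']
      rw [← pow_succ']
    rw [hsum, Finset.sum_range_succ' (fun m => a m * z ^ (M + 1 - m))]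
    simp only [Nat.succ_sub_succ, Nat.sub_zero, Fin.val_zero, Fin.val_succ, pow_zero]
    ring

/-- Closed-loop matrix of a second-order agent with M-tap velocity memory. -/
def PhiM (M : ℕ) (τ ε₁ ε₂ lam : ℝ) (θ : ℕ → ℝ) :
    Matrix (Fin (M + 2)) (Fin (M + 2)) ℝ := fun i j =>
  if (i : ℕ) = 0 then
    (if (j : ℕ) = 0 then 1 else if (j : ℕ) = 1 then τ else 0)
  else if (i : ℕ) = 1 then
    (if (j : ℕ) = 0 then -(τ * ε₁ * lam)
     else if (j : ℕ) = 1 then 1 - τ * ε₂ * lam + τ * θ 0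
     else τ * θ ((j : ℕ) - 1))
  else if (j : ℕ) + 1 = (i : ℕ) then 1 else 0

set_option maxHeartbeats 1000000 in
theorem charpoly_M_tap (M : ℕ) (τ ε₁ ε₂ lam : ℝ) (θ : ℕ → ℝ) (z : ℝ) :
    Matrix.det (z • (1 : Matrix (Fin (M + 2)) (Fin (M + 2)) ℝ) - PhiM M τ ε₁ ε₂ lam θ) =
      z ^ M * (z - 1) * (z - 1 + τ * ε₂ * lam)
        - (z - 1) * ∑ m ∈ Finset.range (M + 1), τ * θ m * z ^ (M - m)
        + τ ^ 2 * ε₁ * lam * z ^ M := by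
  set A := z • (1 : Matrix (Fin (M + 2)) (Fin (M + 2)) ℝ) - PhiM M τ ε₁ ε₂ lam θ with hA
  have hApp : ∀ i j : Fin (M + 2), A i j =
      (if (i : ℕ) = (j : ℕ) then z else 0) - PhiM M τ ε₁ ε₂ lam θ i j := by
    intro i j
    simp only [hA, Matrix.sub_apply, Matrix.smul_apply, Matrix.one_apply, smul_eq_mul,
      mul_ite, mul_one, mul_zero, Fin.ext_iff]
  have e0 : A 0 0 = z - 1 := by
    rw [hApp]; simp [PhiM]
  have e1 : A (0 : Fin (M+1)).succ 0 = τ * ε₁ * lam := by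
    rw [hApp]
    simp only [PhiM, Fin.val_succ, Fin.val_zero]
    norm_num
  have hzero : ∀ i : Fin M, A i.succ.succ 0 = 0 := by
    intro i
    rw [hApp]
    simp only [PhiM, Fin.val_succ, Fin.val_zero]
    split_ifs <;> first | ring1 | (exfalso; first | exact ‹False› | omega) |
      (simp only [*, if_true, if_false]; ring1)
  have hB0 : A.submatrix (Fin.succAbove 0) Fin.succ
      = CompAux M z (fun m => if m = 0 then z - (1 - τ * ε₂ * lam + τ * θ 0)
          else -(τ * θ m)) := by
    ext i j
    rw [Matrix.submatrix_apply, hApp]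
    simp only [PhiM, CompAux, Fin.succAbove_zero, Fin.val_succ, Nat.add_sub_cancel]
    split_ifs <;> first | ring1 | (exfalso; first | exact ‹False› | omega) |
      (simp only [if_false, Nat.add_right_cancel_iff] at *; split_ifs <;>
        first | ring1 | (exfalso; omega))
  have hs0 : (Fin.succ (0 : Fin (M+1))).succAbove 0 = 0 := by
    simp [Fin.succAbove, Fin.lt_def]
  have hsk : ∀ k : Fin M, (Fin.succ (0 : Fin (M+1))).succAbove k.succ = k.succ.succ := by
    intro k; simp [Fin.succAbove, Fin.lt_def]
  have hB1 : A.submatrix (Fin.succAbove (0 : Fin (M+1)).succ) Fin.succ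
      = CompAux M z (fun m => if m = 0 then -τ else 0) := by
    ext i j
    refine Fin.cases ?_ (fun k => ?_) i
    · rw [Matrix.submatrix_apply, hs0, hApp]
      simp only [PhiM, CompAux, Fin.val_succ, Fin.val_zero, Nat.add_sub_cancel]
      split_ifs <;> first | ring1 | (exfalso; first | exact ‹False› | omega)
    · rw [Matrix.submatrix_apply, hsk, hApp]
      simp only [PhiM, CompAux, Fin.val_succ, Fin.val_zero, Nat.add_sub_cancel]
      split_ifs <;> first | ring1 | (exfalso; first | exact ‹False› | omega)
  rw [Matrix.det_succ_column_zero, Fin.sum_univ_succ, Fin.sum_univ_succ]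
  have hz : (∑ i : Fin M, (-1:ℝ) ^ ((i.succ.succ : Fin (M+2)) : ℕ) *
      A i.succ.succ 0 * (A.submatrix i.succ.succ.succAbove Fin.succ).det) = 0 :=
    Finset.sum_eq_zero fun i _ => by rw [hzero i]; ring
  rw [e0, e1, hz, hB0, hB1, compAux_det, compAux_det]
  have hs1 : (∑ m ∈ Finset.range (M + 1),
      (if m = 0 then z - (1 - τ * ε₂ * lam + τ * θ 0) else -(τ * θ m)) * z ^ (M - m))
      = (z - 1 + τ * ε₂ * lam) * z ^ M
        - ∑ m ∈ Finset.range (M + 1), τ * θ m * z ^ (M - m) := by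
    rw [Finset.sum_range_succ' (fun m =>
        (if m = 0 then z - (1 - τ * ε₂ * lam + τ * θ 0) else -(τ * θ m)) * z ^ (M - m)),
      Finset.sum_range_succ' (fun m => τ * θ m * z ^ (M - m))]
    simp only [Nat.succ_ne_zero, if_false, if_true, Nat.sub_zero, neg_mul,
      Finset.sum_neg_distrib, reduceIte]
    ring
  have hs2 : (∑ m ∈ Finset.range (M + 1), (if m = 0 then -τ else 0) * z ^ (M - m))
      = -τ * z ^ M := by
    simp [ite_mul, Finset.sum_ite_eq']
  rw [hs1, hs2]
  simp only [Fin.val_succ, Fin.val_zero, pow_zero, pow_one]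
  ring
end

section
/- Let 0 < λ₂ < λ_N, 0 < r < 1, and consider the quadratic in θ (after scaling by τ): g(θ) = (τ²(r²-1)/λ₂ - τ²(r²+1)/λ_N)θ² + 2τ(1/λ_N - 1/λ₂)(r⁴ - r²)θ + r⁴((r²+1)/λ_N + (r²-1)/λ₂). Then g has a real solution θ with g(θ) ≥ 0 only if (λ₂ - λ_N)r⁴ + 2λ_N r² + λ₂ - λ_N ≥ 0. -/
theorem theta_feasible_implies_discriminant (l2 lN r τ : ℝ)
    (h0 : 0 < l2) (h : l2 < lN) (hr0 : 0 < r) (hr1 : r < 1) (hτ : 0 < τ) :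
    (∃ θ : ℝ,
        (τ ^ 2 * (r ^ 2 - 1) / l2 - τ ^ 2 * (r ^ 2 + 1) / lN) * θ ^ 2
          + 2 * τ * (1 / lN - 1 / l2) * (r ^ 4 - r ^ 2) * θ
          + r ^ 4 * ((r ^ 2 + 1) / lN + (r ^ 2 - 1) / l2) ≥ 0) →
      (l2 - lN) * r ^ 4 + 2 * lN * r ^ 2 + l2 - lN ≥ 0 := by
  rintro ⟨θ, hθ⟩
  have hlN : (0:ℝ) < lN := h0.trans h
  have hl2 : l2 ≠ 0 := ne_of_gt h0
  have hlN' : lN ≠ 0 := ne_of_gt hlN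
  set A : ℝ := τ ^ 2 * ((r ^ 2 - 1) * lN - (r ^ 2 + 1) * l2) with hA
  set B : ℝ := 2 * τ * (l2 - lN) * (r ^ 4 - r ^ 2) with hB
  set C : ℝ := r ^ 4 * ((r ^ 2 + 1) * l2 + (r ^ 2 - 1) * lN) with hC
  have heq : A * θ ^ 2 + B * θ + C
      = l2 * lN * ((τ ^ 2 * (r ^ 2 - 1) / l2 - τ ^ 2 * (r ^ 2 + 1) / lN) * θ ^ 2
          + 2 * τ * (1 / lN - 1 / l2) * (r ^ 4 - r ^ 2) * θ
          + r ^ 4 * ((r ^ 2 + 1) / lN + (r ^ 2 - 1) / l2)) := by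
    rw [hA, hB, hC]; field_simp
  have key : A * θ ^ 2 + B * θ + C ≥ 0 := by
    rw [heq]; exact mul_nonneg (mul_pos h0 hlN).le hθ
  have hr2 : r ^ 2 < 1 := by nlinarith
  have hAneg : A < 0 := by
    have h1 : (r ^ 2 - 1) * lN - (r ^ 2 + 1) * l2 < 0 := by nlinarith
    exact mul_neg_of_pos_of_neg (pow_pos hτ 2) h1
  have disc : B ^ 2 - 4 * A * C
      = 8 * τ ^ 2 * r ^ 4 * l2 * ((l2 - lN) * r ^ 4 + 2 * lN * r ^ 2 + l2 - lN) := by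
    rw [hA, hB, hC]; ring
  have h3 : B ^ 2 - 4 * A * C ≥ 0 := by
    nlinarith [sq_nonneg (2 * A * θ + B), mul_nonneg (neg_nonneg.mpr hAneg.le) key]
  have hpos : 0 < 8 * τ ^ 2 * r ^ 4 * l2 := by positivity
  nlinarith [hpos, disc, h3]
end
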